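/- Let u_1, ..., u_n ∈ ℝ^p be n ≥ 3 distinct points and let J(u) = Σ_{1 ≤ i < j ≤ n} ‖u_i − u_j‖. Then there exist an index j ∈ {1,...,n} and a unit vector v ∈ ℝ^p such that the directional derivative of J with respect to moving u_j in direction v satisfies lim_{t → 0} (1/t) · Σ_{i ≠ j} ( ‖u_i − (u_j + t v)‖ − ‖u_i − u_j‖ ) ≤ −n/2. In particular any configuration of distinct points admits a single-point perturbation decreasing J at rate at least n/2. -/

import Mathlib

open scoped RealInnerProductSpace Topology

open Finset Filter in
private lemma unit_norm' {E : Type*} [NormedAddCommGroup E] [InnerProductSpace ℝ E]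
    (X : E) (hX : X ≠ 0) : ‖‖X‖⁻¹ • X‖ = 1 := by
  rw [norm_smul, norm_inv, norm_norm, inv_mul_cancel₀ (norm_ne_zero_iff.mpr hX)]

set_option maxHeartbeats 1000000 in
private lemma key_ineq' {E : Type*} [NormedAddCommGroup E] [InnerProductSpace ℝ E]
    (X Y Z : E) (hX : X ≠ 0) (hY : Y ≠ 0) (hZ : Z ≠ 0) (h : X + Y + Z = 0) :
    1 ≤ -(⟪‖X‖⁻¹ • X, ‖Y‖⁻¹ • Y⟫ + ⟪‖Y‖⁻¹ • Y, ‖Z‖⁻¹ • Z⟫ + ⟪‖Z‖⁻¹ • Z, ‖X‖⁻¹ • X⟫) := by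
  set x := ‖X‖⁻¹ • X with hx
  set y := ‖Y‖⁻¹ • Y with hy
  set z := ‖Z‖⁻¹ • Z with hz
  have hα : (0:ℝ) < ‖X‖ := norm_pos_iff.mpr hX
  have hβ : (0:ℝ) < ‖Y‖ := norm_pos_iff.mpr hY
  have hγ : (0:ℝ) < ‖Z‖ := norm_pos_iff.mpr hZ
  have hnx : ‖x‖ = 1 := unit_norm' X hX
  have hny : ‖y‖ = 1 := unit_norm' Y hY
  have hnz : ‖z‖ = 1 := unit_norm' Z hZ
  have hX' : X = ‖X‖ • x := by rw [hx, smul_smul, mul_inv_cancel₀ hα.ne', one_smul]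
  have hY' : Y = ‖Y‖ • y := by rw [hy, smul_smul, mul_inv_cancel₀ hβ.ne', one_smul]
  have hZ' : Z = ‖Z‖ • z := by rw [hz, smul_smul, mul_inv_cancel₀ hγ.ne', one_smul]
  have hx1 : ⟪x, x⟫ = 1 := by rw [real_inner_self_eq_norm_sq, hnx]; norm_num
  have hy1 : ⟪y, y⟫ = 1 := by rw [real_inner_self_eq_norm_sq, hny]; norm_num
  have hz1 : ⟪z, z⟫ = 1 := by rw [real_inner_self_eq_norm_sq, hnz]; norm_num
  have hcomb : ‖X‖ • x + ‖Y‖ • y + ‖Z‖ • z = 0 := by rw [← hX', ← hY', ← hZ']; exact h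
  have e1 : ‖X‖ * ⟪x, x⟫ + ‖Y‖ * ⟪y, x⟫ + ‖Z‖ * ⟪z, x⟫ = 0 := by
    have := congrArg (fun w => (⟪w, x⟫ : ℝ)) hcomb
    simpa [inner_add_left, real_inner_smul_left] using this
  have e2 : ‖X‖ * ⟪x, y⟫ + ‖Y‖ * ⟪y, y⟫ + ‖Z‖ * ⟪z, y⟫ = 0 := by
    have := congrArg (fun w => (⟪w, y⟫ : ℝ)) hcomb
    simpa [inner_add_left, real_inner_smul_left] using this
  have e3 : ‖X‖ * ⟪x, z⟫ + ‖Y‖ * ⟪y, z⟫ + ‖Z‖ * ⟪z, z⟫ = 0 := by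
    have := congrArg (fun w => (⟪w, z⟫ : ℝ)) hcomb
    simpa [inner_add_left, real_inner_smul_left] using this
  set r := (⟪x, y⟫ : ℝ) with hrdef
  set q := (⟪z, x⟫ : ℝ) with hqdef
  set pp := (⟪y, z⟫ : ℝ) with hpdef
  have hxy : (⟪y, x⟫ : ℝ) = r := real_inner_comm _ _
  have hzx : (⟪x, z⟫ : ℝ) = q := real_inner_comm _ _
  have hyz : (⟪z, y⟫ : ℝ) = pp := real_inner_comm _ _
  rw [hx1, hxy] at e1; rw [hy1, hyz] at e2; rw [hz1, hzx] at e3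
  have hr1 : r ≤ 1 := by
    have := real_inner_le_norm x y
    rw [hnx, hny] at this; rw [hrdef]; linarith
  have hg2 : ‖Z‖^2 = ‖X‖^2 + ‖Y‖^2 + 2*‖X‖*‖Y‖*r := by
    linear_combination ‖Z‖*e3 - ‖X‖*e1 - ‖Y‖*e2
  have hgle : ‖Z‖ ≤ ‖X‖ + ‖Y‖ := by
    nlinarith [hg2, mul_nonneg (mul_nonneg hα.le hβ.le) (by linarith : (0:ℝ) ≤ 1 - r)]
  have key : ‖Z‖ * (r + pp + q + 1) = (1 + r) * (‖Z‖ - ‖X‖ - ‖Y‖) := by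
    linear_combination e1 + e2
  have hr2 : -1 ≤ r := by
    have := neg_le_of_abs_le (abs_real_inner_le_norm x y)
    rw [hnx, hny] at this; rw [hrdef]; linarith
  show 1 ≤ -(r + pp + q)
  nlinarith [key, mul_nonneg (by linarith : (0:ℝ) ≤ 1 + r)
    (by linarith : (0:ℝ) ≤ ‖X‖ + ‖Y‖ - ‖Z‖)]

private lemma hasDerivAt_norm_sub_smul' {E : Type*} [NormedAddCommGroup E]
    [InnerProductSpace ℝ E] (a v : E) (ha : a ≠ 0) :
    HasDerivAt (fun t : ℝ => ‖a - t • v‖) (-(⟪a, v⟫ / ‖a‖)) 0 := by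
  have hα : (0:ℝ) < ‖a‖ := norm_pos_iff.mpr ha
  have hpoly : HasDerivAt (fun t : ℝ => ‖a‖^2 - 2*⟪a,v⟫*t + ‖v‖^2*t^2)
      (-(2*⟪a,v⟫)) 0 := by
    have h1 : HasDerivAt (fun t : ℝ => t) 1 0 := hasDerivAt_id 0
    have h2 : HasDerivAt (fun t : ℝ => t^2) (2*0) 0 := by
      simpa using (hasDerivAt_pow 2 (0:ℝ))
    have := ((h1.const_mul (2*⟪a,v⟫)).const_sub (‖a‖^2)).add (h2.const_mul (‖v‖^2))
    exact this.congr_deriv (by ring)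
  have hne : ‖a‖^2 - 2*⟪a,v⟫*0 + ‖v‖^2*0^2 ≠ 0 := by
    simpa using pow_ne_zero 2 (norm_ne_zero_iff.mpr ha)
  have hs := hpoly.sqrt hne
  have heq : (fun t : ℝ => Real.sqrt (‖a‖^2 - 2*⟪a,v⟫*t + ‖v‖^2*t^2))
      = fun t : ℝ => ‖a - t • v‖ := by
    funext t
    rw [show ‖a‖^2 - 2*⟪a,v⟫*t + ‖v‖^2*t^2 = ‖a - t • v‖^2 by
      rw [norm_sub_sq_real, real_inner_smul_right, norm_smul]
      simp [mul_pow]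
      ring]
    exact Real.sqrt_sq (norm_nonneg _)
  rw [heq] at hs
  convert hs using 1
  rw [show ‖a‖^2 - 2*⟪a,v⟫*0 + ‖v‖^2*0^2 = ‖a‖^2 by ring, Real.sqrt_sq hα.le]
  field_simp

open Finset in
private lemma sum_triple' {α : Type*} [Fintype α] [DecidableEq α] (f : α → α → α → ℝ) :
    ∑ x ∈ univ.filter
        (fun x : α × α × α => x.1 ≠ x.2.1 ∧ x.1 ≠ x.2.2 ∧ x.2.1 ≠ x.2.2),
      f x.1 x.2.1 x.2.2
      = ∑ j, ∑ i ∈ univ.erase j, ∑ k ∈ (univ.erase j).erase i, f j i k := by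
  rw [Finset.sum_filter, Fintype.sum_prod_type]
  refine Finset.sum_congr rfl fun j _ => ?_
  rw [Fintype.sum_prod_type]
  have step : ∀ i : α,
      (∑ k, if j ≠ i ∧ j ≠ k ∧ i ≠ k then f j i k else 0)
        = if i ∈ univ.erase j then ∑ k ∈ (univ.erase j).erase i, f j i k else 0 := by
    intro i
    by_cases hij : j = i
    · simp [hij]
    · rw [if_pos (by simp [Ne.symm hij])]
      have hfe : (univ.erase j).erase i = univ.filter (fun k => j ≠ i ∧ j ≠ k ∧ i ≠ k) := by
        ext k
        simp only [Finset.mem_erase, Finset.mem_filter, Finset.mem_univ, and_true, true_and]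
        constructor
        · rintro ⟨h1, h2⟩; exact ⟨hij, Ne.symm h2, Ne.symm h1⟩
        · rintro ⟨_, h2, h3⟩; exact ⟨Ne.symm h3, Ne.symm h2⟩
      rw [hfe, Finset.sum_filter]
  rw [Finset.sum_congr rfl fun i _ => step i]
  rw [Finset.sum_ite_mem, Finset.univ_inter]

/-- For `n ≥ 3` distinct points `u 1, …, u n` in `ℝ^p`, there exist an index `j` and a
unit vector `v` such that the directional derivative of the sum-of-pairwise-distances
functional `J(u) = ∑_{i<j} ‖u i − u j‖`, with respect to moving `u j` in direction `v`,
is at most `−n/2`: any configuration of distinct points admits a single-point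
perturbation decreasing `J` at rate at least `n/2`. -/
theorem exists_descent_direction {p n : ℕ} (hn : 3 ≤ n)
    (u : Fin n → EuclideanSpace ℝ (Fin p)) (hu : Function.Injective u) :
    ∃ j : Fin n, ∃ v : EuclideanSpace ℝ (Fin p), ‖v‖ = 1 ∧
      ∃ D : ℝ,
        Filter.Tendsto
          (fun t : ℝ => (1 / t) *
            ∑ i ∈ Finset.univ.erase j, (‖u i - (u j + t • v)‖ - ‖u i - u j‖))
          (𝓝[≠] (0 : ℝ)) (𝓝 D) ∧
        D ≤ -(n : ℝ) / 2 := by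
  classical
  set w : Fin n → Fin n → EuclideanSpace ℝ (Fin p) := fun i j => ‖u i - u j‖⁻¹ • (u i - u j) with hwdef
  set s : Fin n → EuclideanSpace ℝ (Fin p) := fun j => ∑ i ∈ Finset.univ.erase j, w i j with hsdef
  have hsub : ∀ {a b : Fin n}, a ≠ b → u a - u b ≠ 0 :=
    fun {a b} hab => sub_ne_zero.mpr (hu.ne hab)
  have hwneg : ∀ a b : Fin n, w a b = -(w b a) := by
    intro a b
    rw [hwdef]
    simp only
    rw [show u a - u b = -(u b - u a) by abel, norm_neg, smul_neg]
  -- the triangle inequality on cosines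
  have hcos : ∀ i j k : Fin n, j ≠ i → j ≠ k → i ≠ k →
      1 ≤ ⟪w i j, w k j⟫ + ⟪w k i, w j i⟫ + ⟪w j k, w i k⟫ := by
    intro i j k hji hjk hik
    have hkey := key_ineq' (u k - u i) (u j - u k) (u i - u j)
      (hsub (Ne.symm hik)) (hsub hjk) (hsub (Ne.symm hji)) (by abel)
    have hXx : ‖u k - u i‖⁻¹ • (u k - u i) = w k i := rfl
    have hYy : ‖u j - u k‖⁻¹ • (u j - u k) = w j k := rfl
    have hZz : ‖u i - u j‖⁻¹ • (u i - u j) = w i j := rfl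
    rw [hXx, hYy, hZz] at hkey
    rw [hwneg k j, hwneg j i, hwneg i k]
    rw [inner_neg_right, inner_neg_right, inner_neg_right]
    have c1 : (⟪w i j, w j k⟫ : ℝ) = ⟪w j k, w i j⟫ := real_inner_comm _ _
    have c2 : (⟪w k i, w i j⟫ : ℝ) = ⟪w i j, w k i⟫ := real_inner_comm _ _
    have c3 : (⟪w j k, w k i⟫ : ℝ) = ⟪w k i, w j k⟫ := real_inner_comm _ _
    rw [c1, c2, c3]
    linarith [hkey]
  -- unit norms
  have hwunit : ∀ {a b : Fin n}, a ≠ b → ‖w a b‖ = 1 :=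
    fun {a b} hab => unit_norm' _ (hsub hab)
  -- expansion of ‖s j‖²
  have hsq : ∀ j : Fin n, ‖s j‖^2
      = ((Finset.univ.erase j).card : ℝ)
        + ∑ i ∈ Finset.univ.erase j, ∑ k ∈ (Finset.univ.erase j).erase i, ⟪w i j, w k j⟫ := by
    intro j
    have h1 : ‖s j‖^2 = ∑ i ∈ Finset.univ.erase j, ∑ k ∈ Finset.univ.erase j, ⟪w i j, w k j⟫ := by
      rw [← real_inner_self_eq_norm_sq, hsdef]
      simp only
      rw [sum_inner]
      exact Finset.sum_congr rfl fun i _ => inner_sum _ _ _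
    rw [h1]
    have h2 : ∀ i ∈ Finset.univ.erase j,
        (∑ k ∈ Finset.univ.erase j, (⟪w i j, w k j⟫ : ℝ))
          = 1 + ∑ k ∈ (Finset.univ.erase j).erase i, ⟪w i j, w k j⟫ := by
      intro i hi
      have hii : (⟪w i j, w i j⟫ : ℝ) = 1 := by
        rw [real_inner_self_eq_norm_sq, hwunit (Finset.mem_erase.mp hi).1]; norm_num
      rw [← Finset.add_sum_erase _ _ hi, hii]
    rw [Finset.sum_congr rfl h2, Finset.sum_add_distrib, Finset.sum_const, nsmul_eq_mul, mul_one]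
  -- total bound via triple counting
  set S : Finset (Fin n × Fin n × Fin n) := Finset.univ.filter
    (fun x => x.1 ≠ x.2.1 ∧ x.1 ≠ x.2.2 ∧ x.2.1 ≠ x.2.2) with hSdef
  set F : Fin n × Fin n × Fin n → ℝ := fun x => ⟪w x.2.1 x.1, w x.2.2 x.1⟫ with hFdef
  set T : ℝ := ∑ x ∈ S, F x with hTdef
  have hT : T = ∑ j, ∑ i ∈ Finset.univ.erase j, ∑ k ∈ (Finset.univ.erase j).erase i,
      ⟪w i j, w k j⟫ := sum_triple' (fun j i k => ⟪w i j, w k j⟫)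
  -- rotation equivalence
  let e : (Fin n × Fin n × Fin n) ≃ (Fin n × Fin n × Fin n) :=
    ⟨fun x => (x.2.1, x.2.2, x.1), fun x => (x.2.2, x.1, x.2.1), fun x => rfl, fun x => rfl⟩
  have hmem : ∀ x : Fin n × Fin n × Fin n, x ∈ S ↔ e x ∈ S := by
    intro x
    simp only [hSdef, Finset.mem_filter, Finset.mem_univ, true_and, e, Equiv.coe_fn_mk]
    constructor
    · rintro ⟨h1, h2, h3⟩; exact ⟨h3, Ne.symm h1, Ne.symm h2⟩
    · rintro ⟨h1, h2, h3⟩; exact ⟨Ne.symm h2, Ne.symm h3, h1⟩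
  have h2T : ∑ x ∈ S, F (e x) = T :=
    Finset.sum_equiv e hmem (fun x _ => rfl)
  have h3T : ∑ x ∈ S, F (e (e x)) = ∑ x ∈ S, F (e x) :=
    Finset.sum_equiv e hmem (fun x _ => rfl)
  have hcard : (S.card : ℝ) ≤ 3 * T := by
    have hone : ∀ x ∈ S, (1:ℝ) ≤ F x + F (e x) + F (e (e x)) := by
      rintro ⟨j, i, k⟩ hx
      simp only [hSdef, Finset.mem_filter, Finset.mem_univ, true_and] at hx
      obtain ⟨h1, h2, h3⟩ := hx
      exact hcos i j k h1 h2 h3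
    calc (S.card : ℝ) = ∑ _x ∈ S, (1:ℝ) := by rw [Finset.sum_const, nsmul_eq_mul, mul_one]
      _ ≤ ∑ x ∈ S, (F x + F (e x) + F (e (e x))) := Finset.sum_le_sum hone
      _ = 3 * T := by
          rw [Finset.sum_add_distrib, Finset.sum_add_distrib, h2T, h3T, h2T, hTdef]; ring
  have hScard : (S.card : ℝ) = (n:ℝ) * ((n:ℝ) - 1) * ((n:ℝ) - 2) := by
    have := sum_triple' (fun _ _ _ : Fin n => (1:ℝ))
    rw [show (Finset.univ.filter
        (fun x : Fin n × Fin n × Fin n => x.1 ≠ x.2.1 ∧ x.1 ≠ x.2.2 ∧ x.2.1 ≠ x.2.2)) = S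
        from rfl] at this
    rw [Finset.sum_const, nsmul_eq_mul, mul_one] at this
    rw [this]
    have hc : ∀ j : Fin n, ∀ i ∈ Finset.univ.erase j,
        (((Finset.univ.erase j).erase i).card : ℝ) = (n:ℝ) - 2 := by
      intro j i hi
      rw [Finset.card_erase_of_mem hi, Finset.card_erase_of_mem (Finset.mem_univ j),
        Finset.card_univ, Fintype.card_fin]
      have h2 : (2:ℕ) ≤ n := by omega
      rw [Nat.sub_sub, Nat.cast_sub h2]
      norm_num
    have : ∀ j : Fin n, (∑ i ∈ Finset.univ.erase j, ∑ _k ∈ (Finset.univ.erase j).erase i, (1:ℝ))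
        = ((n:ℝ) - 1) * ((n:ℝ) - 2) := by
      intro j
      rw [Finset.sum_congr rfl (fun i hi => by
        rw [Finset.sum_const, nsmul_eq_mul, mul_one, hc j i hi])]
      rw [Finset.sum_const, nsmul_eq_mul,
        Finset.card_erase_of_mem (Finset.mem_univ j), Finset.card_univ, Fintype.card_fin]
      have h1 : (1:ℕ) ≤ n := by omega
      rw [Nat.cast_sub h1, Nat.cast_one]
    rw [Finset.sum_congr rfl (fun j _ => this j), Finset.sum_const, nsmul_eq_mul,
      Finset.card_univ, Fintype.card_fin]
    ring
  -- total sum of squares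
  have htotal : (n:ℝ) * ((n:ℝ)^2 - 1) / 3 ≤ ∑ j, ‖s j‖^2 := by
    have hsum : ∑ j, ‖s j‖^2 = (n:ℝ) * ((n:ℝ) - 1) + T := by
      rw [Finset.sum_congr rfl (fun j _ => hsq j), Finset.sum_add_distrib, hT]
      congr 1
      have hc1 : ∀ j : Fin n, ((Finset.univ.erase j).card : ℝ) = (n:ℝ) - 1 := by
        intro j
        rw [Finset.card_erase_of_mem (Finset.mem_univ j), Finset.card_univ, Fintype.card_fin,
          Nat.cast_sub (by omega : (1:ℕ) ≤ n), Nat.cast_one]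
      rw [Finset.sum_congr rfl (fun j _ => hc1 j), Finset.sum_const, nsmul_eq_mul,
        Finset.card_univ, Fintype.card_fin]
    rw [hsum]
    rw [hScard] at hcard
    have hn3 : (3:ℝ) ≤ (n:ℝ) := by exact_mod_cast hn
    nlinarith [hcard]
  -- pick a good index
  have hbig : ∃ j : Fin n, (n:ℝ)/2 ≤ ‖s j‖ := by
    by_contra hcon
    push_neg at hcon
    have hn3 : (3:ℝ) ≤ (n:ℝ) := by exact_mod_cast hn
    have hlt : ∑ j, ‖s j‖^2 < ∑ _j : Fin n, ((n:ℝ)/2)^2 := by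
      haveI : Nonempty (Fin n) := ⟨⟨0, by omega⟩⟩
      refine Finset.sum_lt_sum_of_nonempty ?_ ?_
      · exact Finset.univ_nonempty
      · intro j _
        have h1 := hcon j
        have h2 := norm_nonneg (s j)
        nlinarith
    rw [Finset.sum_const, nsmul_eq_mul, Finset.card_univ, Fintype.card_fin] at hlt
    nlinarith [htotal]
  obtain ⟨j, hj⟩ := hbig
  have hspos : (0:ℝ) < ‖s j‖ := by
    have hn3 : (3:ℝ) ≤ (n:ℝ) := by exact_mod_cast hn
    linarith
  have hs0 : s j ≠ 0 := by
    intro h0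
    rw [h0, norm_zero] at hspos
    exact lt_irrefl _ hspos
  refine ⟨j, ‖s j‖⁻¹ • s j, unit_norm' _ hs0, -‖s j‖, ?_, by linarith⟩
  set v : EuclideanSpace ℝ (Fin p) := ‖s j‖⁻¹ • s j with hvdef
  -- the derivative of each term
  have hterm : ∀ i ∈ Finset.univ.erase j,
      Filter.Tendsto (slope (fun t : ℝ => ‖(u i - u j) - t • v‖) 0) (𝓝[≠] (0:ℝ))
        (𝓝 (-(⟪u i - u j, v⟫ / ‖u i - u j‖))) := by
    intro i hi
    exact hasDerivAt_iff_tendsto_slope.mp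
      (hasDerivAt_norm_sub_smul' (u i - u j) v (hsub (Finset.mem_erase.mp hi).1))
  have hsumT := tendsto_finset_sum (Finset.univ.erase j) hterm
  -- identify the limit value
  have hDval : ∑ i ∈ Finset.univ.erase j, -(⟪u i - u j, v⟫ / ‖u i - u j‖) = -‖s j‖ := by
    have h1 : ∀ i ∈ Finset.univ.erase j,
        -(⟪u i - u j, v⟫ / ‖u i - u j‖) = -⟪w i j, v⟫ := by
      intro i _
      rw [hwdef]
      simp only
      rw [real_inner_smul_left, div_eq_inv_mul]
    rw [Finset.sum_congr rfl h1, Finset.sum_neg_distrib, ← sum_inner]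
    rw [show (∑ i ∈ Finset.univ.erase j, w i j) = s j from rfl]
    rw [hvdef, real_inner_smul_right, real_inner_self_eq_norm_sq]
    rw [pow_two, ← mul_assoc, inv_mul_cancel₀ hspos.ne', one_mul]
  rw [hDval] at hsumT
  -- identify the functions
  refine hsumT.congr fun t => ?_
  rw [Finset.mul_sum]
  refine Finset.sum_congr rfl fun i _ => ?_
  rw [slope_def_field]
  rw [sub_zero, zero_smul, sub_zero]
  rw [show u i - (u j + t • v) = (u i - u j) - t • v by abel]
  rw [div_eq_inv_mul, one_div]
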